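/- Let X̃_{(1)} ≥ … ≥ X̃_{(p)} be the order statistics of p i.i.d. χ²₁ random variables. Then the expected sum of the k largest, E(Σ_{i=1}^k X̃_{(i)}), can be written as σ̃_p·E(Ỹ_p) + μ̃_p, where μ̃_p = −p∫_{1/p}^{k/p} H̃(u)du − H̃(1/p), σ̃_p = √p·σ̃(1/p, k/p), and Ỹ_p = (Σ_{i=1}^k X̃_{(i)} − μ̃_p)/σ̃_p; moreover μ̃_p/(2p) = G(k/(2p)) + O(log(p)/p) as p→∞ with k = ⌊px⌋, x ∈ (0,1). -/

import Mathlib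

open Real MeasureTheory Filter Set Asymptotics ProbabilityTheory
open Topology

noncomputable def stdPdf (v : ℝ) : ℝ := (Real.sqrt (2 * Real.pi))⁻¹ * Real.exp (-(v ^ 2) / 2)
noncomputable def stdCdf (v : ℝ) : ℝ := ∫ t in Set.Iic v, stdPdf t
noncomputable def stdQuantile : ℝ → ℝ := Function.invFun stdCdf
noncomputable def Htilde (s : ℝ) : ℝ := -(stdQuantile (s / 2)) ^ 2
noncomputable def Gfun (x : ℝ) : ℝ := x - stdQuantile x * stdPdf (stdQuantile x)

/-- Truncated variance `σ̃²(s,t)`. -/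
noncomputable def sigmaSq (s t : ℝ) : ℝ :=
  ∫ u in s..t, ∫ v in s..t, (min u v - u * v) * deriv Htilde u * deriv Htilde v

/-- `μ̃_p = -p ∫_{1/p}^{k/p} H̃(u) du - H̃(1/p)`. -/
noncomputable def muTilde (p k : ℕ) : ℝ :=
  (-(p : ℝ) * ∫ u in (1 / (p : ℝ))..((k : ℝ) / p), Htilde u) - Htilde (1 / (p : ℝ))

/-- `σ̃_p = √p · σ̃(1/p, k/p)`. -/
noncomputable def sigmaTilde (p k : ℕ) : ℝ :=
  Real.sqrt (p : ℝ) * Real.sqrt (sigmaSq (1 / (p : ℝ)) ((k : ℝ) / p))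

/-- The chi-squared distribution with one degree of freedom:
the law of `Z²` for `Z` standard normal. -/
noncomputable def chiSq1 : Measure ℝ := (gaussianReal 0 1).map fun z => z ^ 2

/-- The sum of the `k` largest among `X 0 ω, …, X (p-1) ω`, realized as the
supremum over all size-`k` subsets of the corresponding subset sums. -/
noncomputable def topKSum {p : ℕ} {Ω : Type} (k : ℕ) (X : Fin p → Ω → ℝ) (ω : Ω) : ℝ :=
  ⨆ T : {T : Finset (Fin p) // T.card = k}, ∑ i ∈ (T : Finset (Fin p)), X i ω

lemma stdPdf_pos (v : ℝ) : 0 < stdPdf v := by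
  unfold stdPdf
  positivity

lemma stdPdf_cont : Continuous stdPdf := by
  unfold stdPdf
  continuity

lemma stdPdf_even (v : ℝ) : stdPdf (-v) = stdPdf v := by simp [stdPdf]

lemma stdPdf_integrable : Integrable stdPdf := by
  have h : Integrable (fun v : ℝ => Real.exp (-(1/2) * v ^ 2)) := integrable_exp_neg_mul_sq (by norm_num)
  have := h.const_mul (Real.sqrt (2 * Real.pi))⁻¹
  refine this.congr (Eventually.of_forall fun v => ?_)
  show (Real.sqrt (2*π))⁻¹ * Real.exp (-(1/2)*v^2) = stdPdf v
  unfold stdPdf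
  ring_nf

lemma stdPdf_total : ∫ v, stdPdf v = 1 := by
  have h : ∫ v : ℝ, Real.exp (-(1/2) * v ^ 2) = Real.sqrt (π / (1/2)) := integral_gaussian (1/2)
  rw [show stdPdf = fun v => (Real.sqrt (2 * Real.pi))⁻¹ * Real.exp (-(1/2) * v ^ 2) by
        funext v; unfold stdPdf; congr 1; ring]
  rw [MeasureTheory.integral_const_mul, h]
  rw [show π / (1/2) = 2 * π by ring]
  rw [inv_mul_cancel₀ (by positivity)]

lemma stdCdf_sub (a b : ℝ) : stdCdf b - stdCdf a = ∫ t in a..b, stdPdf t :=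
  intervalIntegral.integral_Iic_sub_Iic (stdPdf_integrable.integrableOn) (stdPdf_integrable.integrableOn)

lemma hasDerivAt_stdCdf (v : ℝ) : HasDerivAt stdCdf (stdPdf v) v := by
  have h : HasDerivAt (fun u => ∫ t in (0:ℝ)..u, stdPdf t) (stdPdf v) v :=
    intervalIntegral.integral_hasDerivAt_right
      (stdPdf_integrable.intervalIntegrable)
      (stdPdf_cont.stronglyMeasurableAtFilter _ _)
      (stdPdf_cont.continuousAt)
  have : stdCdf = fun u => stdCdf 0 + ∫ t in (0:ℝ)..u, stdPdf t := by
    funext u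
    rw [← stdCdf_sub 0 u]; ring
  rw [this]
  simpa using (h.const_add (stdCdf 0))

lemma stdCdf_strictMono : StrictMono stdCdf := by
  intro a b hab
  have : 0 < ∫ t in a..b, stdPdf t := by
    apply intervalIntegral.intervalIntegral_pos_of_pos_on
      (stdPdf_integrable.intervalIntegrable) (fun t _ => stdPdf_pos t) hab
  linarith [stdCdf_sub a b]

lemma stdCdf_cont : Continuous stdCdf := (by
  exact continuous_iff_continuousAt.2 fun v => (hasDerivAt_stdCdf v).continuousAt)


lemma stdCdf_neg (v : ℝ) : stdCdf (-v) = 1 - stdCdf v := by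
  have h1 : stdCdf (-v) = ∫ t in Ioi v, stdPdf t := by
    unfold stdCdf
    calc ∫ t in Iic (-v), stdPdf t = ∫ t in Iic (-v), stdPdf (-t) :=
          setIntegral_congr_fun measurableSet_Iic fun t _ => (stdPdf_even t).symm
      _ = ∫ t in Ioi (-(-v)), stdPdf t := integral_comp_neg_Iic (-v) stdPdf
      _ = ∫ t in Ioi v, stdPdf t := by rw [neg_neg]
  have h2 := intervalIntegral.integral_Iic_add_Ioi (b := v)
    stdPdf_integrable.integrableOn stdPdf_integrable.integrableOn
  rw [stdPdf_total] at h2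
  unfold stdCdf at *
  linarith

lemma stdCdf_tendsto_atTop : Tendsto stdCdf atTop (𝓝 1) := by
  have h : Tendsto (fun v : ℝ => ∫ t in (0:ℝ)..v, stdPdf t) atTop (𝓝 (∫ t in Ioi (0:ℝ), stdPdf t)) :=
    intervalIntegral_tendsto_integral_Ioi 0 stdPdf_integrable.integrableOn tendsto_id
  have heq : ∀ v : ℝ, stdCdf v = stdCdf 0 + ∫ t in (0:ℝ)..v, stdPdf t := by
    intro v; rw [← stdCdf_sub 0 v]; ring
  have htot : stdCdf 0 + ∫ t in Ioi (0:ℝ), stdPdf t = 1 := by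
    have := intervalIntegral.integral_Iic_add_Ioi (b := (0:ℝ))
      stdPdf_integrable.integrableOn stdPdf_integrable.integrableOn
    rw [stdPdf_total] at this
    exact this
  rw [show (1:ℝ) = stdCdf 0 + ∫ t in Ioi (0:ℝ), stdPdf t from htot.symm]
  exact ((tendsto_const_nhds).add h).congr fun v => (heq v).symm

lemma stdCdf_tendsto_atBot : Tendsto stdCdf atBot (𝓝 0) := by
  have h : Tendsto (fun v : ℝ => 1 - stdCdf (-v)) atBot (𝓝 (1 - 1)) := by
    apply Tendsto.sub tendsto_const_nhds
    exact stdCdf_tendsto_atTop.comp tendsto_neg_atBot_atTop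
  simp only [sub_self] at h
  refine h.congr fun v => ?_
  rw [stdCdf_neg]; ring

lemma stdCdf_zero : stdCdf 0 = 1/2 := by
  have := stdCdf_neg 0
  rw [neg_zero] at this
  linarith

lemma stdCdf_nonneg (v : ℝ) : 0 ≤ stdCdf v :=
  setIntegral_nonneg measurableSet_Iic fun t _ => (stdPdf_pos t).le

lemma stdCdf_mem_Ioo (v : ℝ) : stdCdf v ∈ Set.Ioo (0:ℝ) 1 := by
  constructor
  · exact lt_of_le_of_lt (stdCdf_nonneg (v-1)) (stdCdf_strictMono (by linarith : v - 1 < v))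
  · have h2 : stdCdf v < stdCdf (v+1) := stdCdf_strictMono (by linarith)
    have h3 : stdCdf (v+1) ≤ 1 := by
      have := stdCdf_neg (-(v+1))
      rw [neg_neg] at this
      nlinarith [stdCdf_nonneg (-(v+1))]
    linarith

lemma stdCdf_surjOn : ∀ y ∈ Set.Ioo (0:ℝ) 1, ∃ v, stdCdf v = y := by
  intro y hy
  obtain ⟨a, ha⟩ : ∃ a, stdCdf a < y :=
    (stdCdf_tendsto_atBot.eventually (eventually_lt_nhds hy.1)).exists
  obtain ⟨b, hb⟩ : ∃ b, y < stdCdf b :=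
    (stdCdf_tendsto_atTop.eventually (eventually_gt_nhds hy.2)).exists
  have hab : a ≤ b := by
    by_contra h
    exact absurd (stdCdf_strictMono (lt_of_not_ge h)) (by linarith)
  obtain ⟨v, _, hv⟩ := intermediate_value_Icc hab stdCdf_cont.continuousOn
    (mem_Icc.2 ⟨ha.le, hb.le⟩)
  exact ⟨v, hv⟩

lemma stdQuantile_leftInv (v : ℝ) : stdQuantile (stdCdf v) = v :=
  Function.leftInverse_invFun stdCdf_strictMono.injective v

lemma stdCdf_stdQuantile {y : ℝ} (hy : y ∈ Set.Ioo (0:ℝ) 1) : stdCdf (stdQuantile y) = y :=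
  Function.invFun_eq (stdCdf_surjOn y hy)

noncomputable def cdfIso : ℝ ≃o Set.Ioo (0:ℝ) 1 :=
  StrictMono.orderIsoOfSurjective (fun v => ⟨stdCdf v, stdCdf_mem_Ioo v⟩)
    (fun a b hab => Subtype.mk_lt_mk.2 (stdCdf_strictMono hab))
    (fun y => by
      obtain ⟨v, hv⟩ := stdCdf_surjOn y y.2
      exact ⟨v, Subtype.ext hv⟩)

lemma stdQuantile_continuousOn : ContinuousOn stdQuantile (Set.Ioo (0:ℝ) 1) := by
  rw [continuousOn_iff_continuous_restrict]
  have : (Set.Ioo (0:ℝ) 1).restrict stdQuantile = fun y => cdfIso.symm y := by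
    funext y
    apply stdCdf_strictMono.injective
    show stdCdf (stdQuantile y) = _
    rw [stdCdf_stdQuantile y.2]
    have : cdfIso (cdfIso.symm y) = y := cdfIso.apply_symm_apply y
    have h2 : stdCdf (cdfIso.symm y) = (y : ℝ) := congrArg Subtype.val this
    rw [h2]
  change Continuous ((Set.Ioo (0:ℝ) 1).restrict stdQuantile)
  rw [this]
  exact cdfIso.symm.continuous

lemma stdQuantile_continuousAt {y : ℝ} (hy : y ∈ Set.Ioo (0:ℝ) 1) :
    ContinuousAt stdQuantile y :=
  stdQuantile_continuousOn.continuousAt (isOpen_Ioo.mem_nhds hy)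

lemma hasDerivAt_stdQuantile {y : ℝ} (hy : y ∈ Set.Ioo (0:ℝ) 1) :
    HasDerivAt stdQuantile (stdPdf (stdQuantile y))⁻¹ y := by
  apply HasDerivAt.of_local_left_inverse (stdQuantile_continuousAt hy)
    (hasDerivAt_stdCdf (stdQuantile y)) (ne_of_gt (stdPdf_pos _))
  filter_upwards [isOpen_Ioo.mem_nhds hy] with z hz
  exact stdCdf_stdQuantile hz

lemma hasDerivAt_stdPdf (v : ℝ) : HasDerivAt stdPdf (-v * stdPdf v) v := by
  have h1 := ((hasDerivAt_pow 2 v).neg.div_const 2)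
  have h2 := (h1.exp).const_mul (Real.sqrt (2 * Real.pi))⁻¹
  have h3 : HasDerivAt stdPdf
      ((Real.sqrt (2 * Real.pi))⁻¹ * (Real.exp (-(v^2)/2) * (-((2:ℕ) * v ^ (2-1)) / 2))) v := h2
  convert h3 using 1
  unfold stdPdf
  push_cast
  ring

lemma hasDerivAt_Gfun {y : ℝ} (hy : y ∈ Set.Ioo (0:ℝ) 1) :
    HasDerivAt Gfun ((stdQuantile y) ^ 2) y := by
  set q := stdQuantile y with hq
  have hQ := hasDerivAt_stdQuantile hy
  have hφ : HasDerivAt (fun x => stdPdf (stdQuantile x))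
      (-q * stdPdf q * (stdPdf q)⁻¹) y := by
    have := (hasDerivAt_stdPdf q).comp y hQ; exact this
  have hprod : HasDerivAt (fun x => stdQuantile x * stdPdf (stdQuantile x))
      ((stdPdf q)⁻¹ * stdPdf q + q * (-q * stdPdf q * (stdPdf q)⁻¹)) y := hQ.mul hφ
  have h : HasDerivAt Gfun (1 - ((stdPdf q)⁻¹ * stdPdf q + q * (-q * stdPdf q * (stdPdf q)⁻¹))) y :=
    (hasDerivAt_id y).sub hprod
  convert h using 1
  have hne : stdPdf q ≠ 0 := ne_of_gt (stdPdf_pos q)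
  field_simp
  ring

lemma hasDerivAt_GH {u : ℝ} (hu : u ∈ Set.Ioo (0:ℝ) 2) :
    HasDerivAt (fun u => 2 * Gfun (u / 2)) (-Htilde u) u := by
  have hu2 : u / 2 ∈ Set.Ioo (0:ℝ) 1 := ⟨by linarith [hu.1], by linarith [hu.2]⟩
  have h := ((hasDerivAt_Gfun hu2).comp u ((hasDerivAt_id u).div_const 2)).const_mul 2
  refine h.congr_deriv ?_
  unfold Htilde
  ring

lemma Htilde_continuousOn : ContinuousOn Htilde (Set.Ioo (0:ℝ) 2) := by
  have : ContinuousOn (fun s : ℝ => s / 2) (Set.Ioo (0:ℝ) 2) := (continuous_id.div_const 2).continuousOn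
  have h2 : Set.MapsTo (fun s : ℝ => s / 2) (Set.Ioo (0:ℝ) 2) (Set.Ioo (0:ℝ) 1) :=
    fun s hs => ⟨by linarith [hs.1], by linarith [hs.2]⟩
  exact ((stdQuantile_continuousOn.comp this h2).pow 2).neg

lemma integral_Htilde {a b : ℝ} (ha : a ∈ Set.Ioo (0:ℝ) 2) (hb : b ∈ Set.Ioo (0:ℝ) 2) :
    ∫ u in a..b, Htilde u = -(2 * Gfun (b / 2) - 2 * Gfun (a / 2)) := by
  have hsub : Set.uIcc a b ⊆ Set.Ioo (0:ℝ) 2 := Set.ordConnected_Ioo.uIcc_subset ha hb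
  have key : ∫ u in a..b, -Htilde u = 2 * Gfun (b / 2) - 2 * Gfun (a / 2) :=
    intervalIntegral.integral_eq_sub_of_hasDerivAt
      (fun u hu => hasDerivAt_GH (hsub hu))
      ((Htilde_continuousOn.neg.mono hsub).intervalIntegrable)
  rw [intervalIntegral.integral_neg] at key
  linarith

lemma stdPdf_tendsto : Tendsto stdPdf atTop (𝓝 0) := by
  have h1 : Tendsto (fun v : ℝ => -(v^2)/2) atTop atBot := by
    apply Tendsto.atBot_div_const (by norm_num : (0:ℝ) < 2)
    exact tendsto_neg_atTop_atBot.comp (tendsto_pow_atTop (by norm_num : 2 ≠ 0))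
  have h2 := (Real.tendsto_exp_atBot.comp h1).const_mul (Real.sqrt (2 * Real.pi))⁻¹
  rw [mul_zero] at h2
  exact h2.congr fun v => rfl

lemma tail_tendsto : Tendsto (fun t => stdCdf (-t)) atTop (𝓝 0) :=
  stdCdf_tendsto_atBot.comp tendsto_neg_atTop_atBot

lemma hasDerivAt_tail (t : ℝ) : HasDerivAt (fun t => stdCdf (-t)) (-stdPdf t) t := by
  have h := (hasDerivAt_stdCdf (-t)).comp t (hasDerivAt_neg t)
  simp [stdPdf_even] at h
  exact h

lemma mill_upper {t : ℝ} (ht : 1 ≤ t) : stdCdf (-t) ≤ stdPdf t / t := by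
  set g : ℝ → ℝ := fun s => stdPdf s / s - stdCdf (-s) with hg
  have hderiv : ∀ s : ℝ, s ≠ 0 → HasDerivAt g ((-s * stdPdf s * s - stdPdf s * 1) / s^2 - -stdPdf s) s := by
    intro s hs
    exact ((hasDerivAt_stdPdf s).div (hasDerivAt_id s) hs).sub (hasDerivAt_tail s)
  have hanti : AntitoneOn g (Set.Ici (1:ℝ)) := by
    apply antitoneOn_of_deriv_nonpos (convex_Ici 1)
    · intro s hs
      have hs0 : s ≠ 0 := by rintro rfl; simp at hs; linarith
      exact ((hderiv s hs0).continuousAt.continuousWithinAt)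
    · intro s hs
      rw [interior_Ici] at hs
      exact ((hderiv s (by rintro rfl; simp at hs; linarith)).differentiableAt).differentiableWithinAt
    · intro s hs
      rw [interior_Ici] at hs
      have hs1 : (1:ℝ) < s := hs
      have hs0 : s ≠ 0 := by linarith
      rw [(hderiv s hs0).deriv]
      have hp := stdPdf_pos s
      have : (-s * stdPdf s * s - stdPdf s * 1) / s^2 - -stdPdf s = -stdPdf s / s^2 := by
        field_simp
        ring
      rw [this]
      apply div_nonpos_of_nonpos_of_nonneg
      · linarith
      · positivity
  have hlim : Tendsto g atTop (𝓝 0) := by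
    have h1 : Tendsto (fun s : ℝ => stdPdf s / s) atTop (𝓝 0) := by
      have := stdPdf_tendsto.mul tendsto_inv_atTop_zero
      simpa [div_eq_mul_inv] using this
    simpa using h1.sub tail_tendsto
  have h0 : 0 ≤ g t := by
    apply le_of_tendsto hlim
    filter_upwards [eventually_ge_atTop t] with s hs
    exact hanti (by exact ht) (le_trans ht hs) hs
  simpa [hg] using h0

lemma mill_lower {t : ℝ} (ht : 0 ≤ t) : t * stdPdf t / (1 + t^2) ≤ stdCdf (-t) := by
  set f : ℝ → ℝ := fun s => stdCdf (-s) - s * stdPdf s / (1 + s^2) with hf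
  have hderiv : ∀ s : ℝ, HasDerivAt f
      (-stdPdf s - ((1 * stdPdf s + s * (-s * stdPdf s)) * (1 + s^2) - s * stdPdf s * (0 + 2*s^1)) / (1 + s^2)^2) s := by
    intro s
    have hden : (1 + s^2) ≠ 0 := by positivity
    have hnum : HasDerivAt (fun s : ℝ => s * stdPdf s) (1 * stdPdf s + s * (-s * stdPdf s)) s :=
      (hasDerivAt_id s).mul (hasDerivAt_stdPdf s)
    have hden' : HasDerivAt (fun s : ℝ => 1 + s^2) (0 + 2*s^1) s :=
      (hasDerivAt_const s 1).add (by simpa using (hasDerivAt_pow 2 s))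
    exact (hasDerivAt_tail s).sub (hnum.div hden' hden)
  have hanti : AntitoneOn f (Set.Ici (0:ℝ)) := by
    apply antitoneOn_of_deriv_nonpos (convex_Ici 0)
    · exact fun s _ => (hderiv s).continuousAt.continuousWithinAt
    · exact fun s _ => (hderiv s).differentiableAt.differentiableWithinAt
    · intro s _
      rw [(hderiv s).deriv]
      have hp := stdPdf_pos s
      have hden : (1 + s^2) ≠ 0 := by positivity
      have heq : -stdPdf s - ((1 * stdPdf s + s * (-s * stdPdf s)) * (1 + s^2) - s * stdPdf s * (0 + 2*s^1)) / (1 + s^2)^2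
          = -(2 * stdPdf s) / (1 + s^2)^2 := by
        field_simp
        ring
      rw [heq]
      apply div_nonpos_of_nonpos_of_nonneg
      · linarith
      · positivity
  have hlim : Tendsto f atTop (𝓝 0) := by
    have h1 : Tendsto (fun s : ℝ => s * stdPdf s / (1 + s^2)) atTop (𝓝 0) := by
      apply squeeze_zero' (g := stdPdf)
      · filter_upwards [eventually_ge_atTop (0:ℝ)] with s hs
        have := (stdPdf_pos s).le
        positivity
      · filter_upwards [eventually_ge_atTop (0:ℝ)] with s hs
        rw [div_le_iff₀ (by positivity)]
        nlinarith [mul_nonneg (stdPdf_pos s).le (by nlinarith [sq_nonneg (s-1)] : (0:ℝ) ≤ 1 + s^2 - s)]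
      · exact stdPdf_tendsto
    simpa using tail_tendsto.sub h1
  have h0 : 0 ≤ f t := by
    apply le_of_tendsto hlim
    filter_upwards [eventually_ge_atTop t] with s hs
    exact hanti (by exact ht) (le_trans ht hs) hs
  simpa [hf] using h0

lemma sqrt_two_pi_ge_one : (1:ℝ) ≤ Real.sqrt (2 * Real.pi) := by
  rw [show (1:ℝ) = Real.sqrt 1 by simp]
  apply Real.sqrt_le_sqrt
  nlinarith [Real.pi_gt_three]

lemma stdPdf_le_exp (t : ℝ) : stdPdf t ≤ Real.exp (-(t^2)/2) := by
  unfold stdPdf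
  have h := sqrt_two_pi_ge_one
  have : (Real.sqrt (2 * Real.pi))⁻¹ ≤ 1 := by
    rw [inv_le_one_iff₀]; right; exact h
  nlinarith [Real.exp_pos (-(t^2)/2)]

/-- Key bounds on the quantile at small `y`. -/
lemma quantile_bounds {y : ℝ} (hy : y ∈ Set.Ioo (0:ℝ) 1) (hy2 : y ≤ stdCdf (-1)) :
    1 ≤ -stdQuantile y ∧ (stdQuantile y)^2 ≤ -2 * Real.log y ∧
      (-stdQuantile y) * stdPdf (stdQuantile y) ≤ (1 + (stdQuantile y)^2) * y := by
  set q := stdQuantile y with hq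
  have hcq : stdCdf q = y := stdCdf_stdQuantile hy
  have ht1 : q ≤ -1 := by
    by_contra h
    push_neg at h
    have := stdCdf_strictMono h
    rw [hcq] at this
    linarith
  set t := -q with htq
  have h1t : 1 ≤ t := by linarith
  have hcmt : stdCdf (-t) = y := by rw [htq, neg_neg, hcq]
  refine ⟨h1t, ?_, ?_⟩
  · have h2 : y ≤ Real.exp (-(t^2)/2) := by
      calc y = stdCdf (-t) := hcmt.symm
        _ ≤ stdPdf t / t := mill_upper h1t
        _ ≤ stdPdf t := by
            rw [div_le_iff₀ (by linarith)]
            nlinarith [stdPdf_pos t]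
        _ ≤ Real.exp (-(t^2)/2) := stdPdf_le_exp t
    have h3 := Real.log_le_log hy.1 h2
    rw [Real.log_exp] at h3
    have : q^2 = t^2 := by rw [htq]; ring
    rw [this]
    linarith
  · have h4 := mill_lower (by linarith : (0:ℝ) ≤ t)
    rw [hcmt] at h4
    rw [div_le_iff₀ (by positivity)] at h4
    have hev : stdPdf q = stdPdf t := by rw [htq]; rw [stdPdf_even]
    have hq2 : q^2 = t^2 := by rw [htq]; ring
    rw [hev, hq2]
    nlinarith [h4]

lemma muTilde_eq {p k : ℕ} (hp : 1 ≤ p) (hk : 1 ≤ k) (hkp : k ≤ p) :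
    muTilde p k = 2 * p * (Gfun ((k:ℝ)/(2*p)) - Gfun (1/(2*(p:ℝ))))
      + (stdQuantile (1/(2*(p:ℝ))))^2 := by
  have hp0 : (0:ℝ) < p := by exact_mod_cast hp
  have hp1 : (1:ℝ) ≤ p := by exact_mod_cast hp
  have ha : (1:ℝ)/p ∈ Set.Ioo (0:ℝ) 2 := by
    constructor
    · positivity
    · rw [div_lt_iff₀ hp0]; nlinarith
  have hb : (k:ℝ)/p ∈ Set.Ioo (0:ℝ) 2 := by
    have hk0 : (0:ℝ) < k := by exact_mod_cast hk
    have hkp' : (k:ℝ) ≤ p := by exact_mod_cast hkp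
    constructor
    · positivity
    · rw [div_lt_iff₀ hp0]; nlinarith
  unfold muTilde
  rw [integral_Htilde ha hb]
  unfold Htilde
  have e1 : ((k:ℝ)/p)/2 = (k:ℝ)/(2*p) := by ring
  have e2 : ((1:ℝ)/p)/2 = 1/(2*(p:ℝ)) := by ring
  rw [e1, e2]
  ring

lemma log_ge_one {p : ℕ} (hp : 3 ≤ p) : 1 ≤ Real.log p := by
  rw [Real.le_log_iff_exp_le (by positivity : (0:ℝ) < (p:ℕ))]
  have := Real.exp_one_lt_d9
  have hp3 : (3:ℝ) ≤ p := by exact_mod_cast hp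
  linarith

set_option maxHeartbeats 1000000 in
lemma part2 (x : ℝ) (hx : x ∈ Set.Ioo (0:ℝ) 1) :
    (fun p : ℕ =>
        muTilde p ⌊(p : ℝ) * x⌋₊ / (2 * p) - Gfun ((⌊(p : ℝ) * x⌋₊ : ℝ) / (2 * p)))
      =O[atTop] fun p : ℕ => Real.log p / p := by
  rw [isBigO_iff]
  refine ⟨5, ?_⟩
  obtain ⟨N1, hN1⟩ := exists_nat_gt (1/x)
  have hc : 0 < stdCdf (-1) := (stdCdf_mem_Ioo (-1)).1
  obtain ⟨N2, hN2⟩ := exists_nat_gt (1/(2*stdCdf (-1)))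
  filter_upwards [eventually_ge_atTop (max (max N1 N2) 3)] with p hp
  have hp3 : 3 ≤ p := le_trans (le_max_right _ _) hp
  have hpN1 : N1 ≤ p := le_trans (le_trans (le_max_left _ _) (le_max_left _ _)) hp
  have hpN2 : N2 ≤ p := le_trans (le_trans (le_max_right _ _) (le_max_left _ _)) hp
  have hp0 : (0:ℝ) < p := by exact_mod_cast Nat.cast_pos.mpr (by omega)
  have hp3' : (3:ℝ) ≤ p := by exact_mod_cast hp3
  set k := ⌊(p : ℝ) * x⌋₊ with hk
  have hk1 : 1 ≤ k := by
    apply Nat.le_floor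
    have : (1/x : ℝ) < p := lt_of_lt_of_le hN1 (by exact_mod_cast hpN1)
    rw [div_lt_iff₀ hx.1] at this
    push_cast
    nlinarith
  have hkp : k ≤ p := by
    calc k ≤ ⌊(p:ℝ)⌋₊ := Nat.floor_le_floor (by nlinarith [hx.2] : (p:ℝ) * x ≤ (p:ℝ))
      _ = p := Nat.floor_natCast p
  set y : ℝ := 1/(2*(p:ℝ)) with hy_def
  have hy : y ∈ Set.Ioo (0:ℝ) 1 := by
    constructor
    · positivity
    · rw [hy_def, div_lt_iff₀ (by positivity)]; nlinarith
  have hy2 : y ≤ stdCdf (-1) := by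
    have hN2' : (1/(2*stdCdf (-1)) : ℝ) < p := lt_of_lt_of_le hN2 (by exact_mod_cast hpN2)
    rw [div_lt_iff₀ (by positivity)] at hN2'
    rw [hy_def, div_le_iff₀ (by positivity)]
    nlinarith
  obtain ⟨h1t, hQ2, hQφ⟩ := quantile_bounds hy hy2
  set q := stdQuantile y with hq_def
  set L := Real.log p with hL_def
  have hmu := muTilde_eq (by omega : 1 ≤ p) hk1 hkp
  rw [← hy_def] at hmu
  have hlog : -2 * Real.log y = 2 * Real.log (2*(p:ℝ)) := by
    rw [hy_def, one_div, Real.log_inv]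
    ring
  have hlog2 : Real.log (2*(p:ℝ)) = Real.log 2 + L :=
    Real.log_mul (by norm_num) (ne_of_gt hp0)
  have hlogp : 1 ≤ L := log_ge_one hp3
  have hlog2' : Real.log 2 ≤ 1 := by
    have := Real.log_two_lt_d9
    linarith
  have hQ2' : q^2 ≤ 2 * Real.log 2 + 2 * L := by
    calc q^2 ≤ -2 * Real.log y := hQ2
      _ = 2 * Real.log (2*(p:ℝ)) := hlog
      _ = 2 * Real.log 2 + 2 * L := by rw [hlog2]; ring
  have hGy : Gfun y = y - q * stdPdf q := rfl
  have hmain : muTilde p k / (2 * p) - Gfun ((k : ℝ) / (2 * p)) = -Gfun y + q^2 * y := by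
    rw [hmu]
    have h2p : (2*(p:ℝ)) ≠ 0 := by positivity
    have hyy : y * (2*(p:ℝ)) = 1 := by rw [hy_def]; field_simp
    field_simp
    nlinarith [hyy]
  rw [hmain]
  have hφq : 0 < stdPdf q := stdPdf_pos q
  set A := (-q) * stdPdf q with hA_def
  have htφ : A ≤ (1 + q^2) * y := hQφ
  have htφ0 : 0 ≤ A := mul_nonneg (by linarith) hφq.le
  have hbound : |(-Gfun y + q^2 * y)| ≤ 5 * (L / p) := by
    rw [hGy]
    have hE : -(y - q * stdPdf q) + q^2 * y = -y - A + q^2 * y := by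
      rw [hA_def]; ring
    rw [hE]
    have h5 : 5 * (L / p) = 10 * L * y := by
      rw [hy_def]; field_simp; ring
    rw [h5, abs_le]
    have hy0 : 0 ≤ y := hy.1.le
    have hqy : q^2 * y ≤ (2 * Real.log 2 + 2 * L) * y :=
      mul_le_mul_of_nonneg_right hQ2' hy0
    have hqy0 : 0 ≤ q^2 * y := mul_nonneg (sq_nonneg q) hy0
    have h8 : (2 * Real.log 2 + 2 * L) * y ≤ 10 * L * y :=
      mul_le_mul_of_nonneg_right (by linarith) hy0
    have hA2 : A ≤ (3 + 2 * L) * y := by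
      calc A ≤ (1 + q^2) * y := htφ
        _ ≤ (3 + 2 * L) * y := mul_le_mul_of_nonneg_right (by linarith) hy0
    have h9 : (4 + 2 * L) * y ≤ 10 * L * y :=
      mul_le_mul_of_nonneg_right (by linarith) hy0
    constructor
    · linarith
    · linarith
  calc |(-Gfun y + q^2 * y)| ≤ 5 * (L / p) := hbound
    _ ≤ 5 * ‖Real.log p / p‖ := by
        rw [Real.norm_eq_abs, hL_def]
        have := le_abs_self (Real.log p / p)
        linarith

theorem orderstat_sum_decomposition (x : ℝ) (hx : x ∈ Set.Ioo (0 : ℝ) 1) :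
    (∀ (Ω : Type) (_ : MeasurableSpace Ω) (P : Measure Ω), IsProbabilityMeasure P →
      ∀ (p k : ℕ), k ≤ p → ∀ X : Fin p → Ω → ℝ,
        (∀ i, Measurable (X i)) →
        (∀ i, P.map (X i) = chiSq1) →
        iIndepFun X P →
        Integrable (topKSum k X) P →
        sigmaTilde p k ≠ 0 →
        (∫ ω, topKSum k X ω ∂P) =
          sigmaTilde p k *
              (∫ ω, (topKSum k X ω - muTilde p k) / sigmaTilde p k ∂P) +
            muTilde p k) ∧
    (fun p : ℕ =>
        muTilde p ⌊(p : ℝ) * x⌋₊ / (2 * p) - Gfun ((⌊(p : ℝ) * x⌋₊ : ℝ) / (2 * p)))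
      =O[atTop] fun p : ℕ => Real.log p / p := by
  constructor
  · intro Ω _ P hP p k hkp X hmeas hmap hind hint hσ
    haveI := hP
    have h1 : ∫ ω, (topKSum k X ω - muTilde p k) / sigmaTilde p k ∂P
        = ((∫ ω, topKSum k X ω ∂P) - muTilde p k) / sigmaTilde p k := by
      rw [integral_div, integral_sub hint (integrable_const _), integral_const]
      simp
    rw [h1, mul_div_cancel₀ _ hσ]
    ring
  · exact part2 x hx
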